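/- Let 1 ≤ t₁ < t₂ ≤ 17 + 12√2 be real numbers, and suppose ψ is a linear equivalence between the bases of the hypersurfaces P_{t₁} and P_{t₂} of the special form x₀ ↦ λx₀, x ↦ Cx with λ ∈ ℝ*, C ∈ GL_n(ℝ), matching the graphs of the defining polynomials. Then comparing fourth-order homogeneous terms, the quartic forms λ⁻¹·(ξ²+η²)(ξ²+t₁η²) and (ξ'²+η'²)(ξ'²+t₂η'²)∘(linear map induced on the relevant 2-dimensional quotient) must coincide; in particular, linear non-equivalence over ℝ of the binary quartics q_{t₁} and q_{t₂} (up to nonzero scalar) implies no such ψ exists. Formally: if for all C ∈ GL₂(ℝ) and λ ∈ ℝ* we have q_{t₂}∘C ≠ λ·q_{t₁}, and the degree-4 parts of the defining polynomials of P_{t₁}, P_{t₂} are q_{t₁}(x_{k-1},x_{k+1}) and q_{t₂}(x_{k-1},x_{k+1}) respectively while all other terms have degree ≤ 3, then no map (x₀, x) ↦ (λx₀, Cx) with λ ∈ ℝ*, C ∈ GL_n(ℝ) sends the graph {x₀ = f_{t₁}(x)} onto the graph {x₀ = f_{t₂}(x)}. -/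

import Mathlib

open Polynomial MvPolynomial in
private lemma stmt19_aux_eval {n : ℕ} (R : MvPolynomial (Fin n) ℝ) (x : Fin n → ℝ) (s : ℝ) :
    Polynomial.eval s (MvPolynomial.aeval (fun i => Polynomial.C (x i) * Polynomial.X) R)
      = MvPolynomial.eval (fun i => s * x i) R := by
  induction R using MvPolynomial.induction_on with
  | C c => simp
  | add p q hp hq => simp [hp, hq]
  | mul_X p i hp =>
      simp only [map_mul, MvPolynomial.aeval_X, Polynomial.eval_mul, Polynomial.eval_C,
        Polynomial.eval_X, MvPolynomial.eval_X, MvPolynomial.eval_mul, hp]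
      ring

open Polynomial in
private lemma stmt19_aux_coeff4 {n : ℕ} (R : MvPolynomial (Fin n) ℝ)
    (hR : R.totalDegree ≤ 3) (x : Fin n → ℝ) :
    (MvPolynomial.aeval (fun i => Polynomial.C (x i) * Polynomial.X) R).coeff 4 = 0 := by
  rw [MvPolynomial.aeval_def, MvPolynomial.eval₂_eq, Polynomial.finset_sum_coeff]
  apply Finset.sum_eq_zero
  intro d hd
  have hd4 : (∑ i ∈ d.support, d i) ≤ 3 := le_trans (MvPolynomial.le_totalDegree hd) hR
  refine Polynomial.coeff_eq_zero_of_natDegree_lt (lt_of_le_of_lt ?_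
    (by norm_num : (3:ℕ) < 4))
  refine le_trans (Polynomial.natDegree_mul_le) ?_
  have hC0 : (algebraMap ℝ (Polynomial ℝ) (R.coeff d)).natDegree = 0 := by
    simp [Polynomial.algebraMap_eq]
  rw [hC0, zero_add]
  refine le_trans (Polynomial.natDegree_prod_le _ _) (le_trans ?_ hd4)
  refine Finset.sum_le_sum ?_
  intro i _
  refine le_trans (Polynomial.natDegree_pow_le) ?_
  have : (Polynomial.C (x i) * Polynomial.X).natDegree ≤ 1 :=
    le_trans (Polynomial.natDegree_C_mul_le _ _) (le_of_eq Polynomial.natDegree_X)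
  calc d i * (Polynomial.C (x i) * Polynomial.X).natDegree ≤ d i * 1 :=
        Nat.mul_le_mul_left _ this
    _ = d i := Nat.mul_one _

private lemma stmt19_key {n : ℕ} (l A B : ℝ) (x y : Fin n → ℝ)
    (R₁ R₂ : MvPolynomial (Fin n) ℝ)
    (hR₁ : R₁.totalDegree ≤ 3) (hR₂ : R₂.totalDegree ≤ 3)
    (h : ∀ s : ℝ, l * (A * s ^ 4 + MvPolynomial.eval (fun i => s * x i) R₁)
      = B * s ^ 4 + MvPolynomial.eval (fun i => s * y i) R₂) : l * A = B := by
  set P₁ := MvPolynomial.aeval (fun i => Polynomial.C (x i) * Polynomial.X) R₁ with hP₁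
  set P₂ := MvPolynomial.aeval (fun i => Polynomial.C (y i) * Polynomial.X) R₂ with hP₂
  have hP : Polynomial.C l * (Polynomial.C A * Polynomial.X ^ 4 + P₁)
      = Polynomial.C B * Polynomial.X ^ 4 + P₂ := by
    apply Polynomial.funext
    intro s
    simp only [Polynomial.eval_mul, Polynomial.eval_add, Polynomial.eval_C,
      Polynomial.eval_pow, Polynomial.eval_X, hP₁, hP₂, stmt19_aux_eval]
    exact h s
  have h4 := congrArg (fun p => Polynomial.coeff p 4) hP
  have hc₁ : P₁.coeff 4 = 0 := stmt19_aux_coeff4 R₁ hR₁ x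
  have hc₂ : P₂.coeff 4 = 0 := stmt19_aux_coeff4 R₂ hR₂ y
  simpa [Polynomial.coeff_C_mul, Polynomial.coeff_add, Polynomial.coeff_X_pow,
    stmt19_aux_coeff4 R₁ hR₁ x, stmt19_aux_coeff4 R₂ hR₂ y, hc₁, hc₂] using h4

/-- If the binary quartics `q_{t₁}` and `q_{t₂}` are not linearly equivalent over `ℝ` up to
a nonzero scalar, and `f₁, f₂ : ℝⁿ → ℝ` have degree-4 parts `q_{t₁}(x_a, x_b)` and
`q_{t₂}(x_a, x_b)` with all remaining terms of degree `≤ 3`, then no map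
`(x₀, x) ↦ (λx₀, Cx)` with `λ ∈ ℝ*`, `C ∈ GLₙ(ℝ)` sends the graph of `f₁` onto the graph
of `f₂`. -/
theorem stmt19 (t₁ t₂ : ℝ) (h1 : 1 ≤ t₁) (h12 : t₁ < t₂)
    (h2 : t₂ ≤ 17 + 12 * Real.sqrt 2)
    (n : ℕ) (a b : Fin n) (hab : a ≠ b)
    (R₁ R₂ : MvPolynomial (Fin n) ℝ)
    (hR₁ : R₁.totalDegree ≤ 3) (hR₂ : R₂.totalDegree ≤ 3)
    (hq : ∀ (C : Matrix (Fin 2) (Fin 2) ℝ) (l : ℝ), IsUnit C.det → l ≠ 0 →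
      ¬ ∀ ξ η : ℝ,
        ((C 0 0 * ξ + C 0 1 * η) ^ 2 + (C 1 0 * ξ + C 1 1 * η) ^ 2) *
            ((C 0 0 * ξ + C 0 1 * η) ^ 2 + t₂ * (C 1 0 * ξ + C 1 1 * η) ^ 2)
          = l * ((ξ ^ 2 + η ^ 2) * (ξ ^ 2 + t₁ * η ^ 2))) :
    ¬ ∃ (l : ℝ) (C : Matrix (Fin n) (Fin n) ℝ), l ≠ 0 ∧ IsUnit C.det ∧
      (fun X : ℝ × (Fin n → ℝ) => (l * X.1, C.mulVec X.2)) ''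
          {X : ℝ × (Fin n → ℝ) | X.1 =
            ((X.2 a) ^ 2 + (X.2 b) ^ 2) * ((X.2 a) ^ 2 + t₁ * (X.2 b) ^ 2)
              + MvPolynomial.eval X.2 R₁}
        = {X : ℝ × (Fin n → ℝ) | X.1 =
            ((X.2 a) ^ 2 + (X.2 b) ^ 2) * ((X.2 a) ^ 2 + t₂ * (X.2 b) ^ 2)
              + MvPolynomial.eval X.2 R₂} := by
  rintro ⟨l, C, hl, hC, hset⟩
  -- graph mapping gives the functional equation
  have himg : ∀ x : Fin n → ℝ,
      l * (((x a) ^ 2 + (x b) ^ 2) * ((x a) ^ 2 + t₁ * (x b) ^ 2) + MvPolynomial.eval x R₁)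
        = ((C.mulVec x a) ^ 2 + (C.mulVec x b) ^ 2)
            * ((C.mulVec x a) ^ 2 + t₂ * (C.mulVec x b) ^ 2)
          + MvPolynomial.eval (C.mulVec x) R₂ := by
    intro x
    have hmem : (l * (((x a) ^ 2 + (x b) ^ 2) * ((x a) ^ 2 + t₁ * (x b) ^ 2)
        + MvPolynomial.eval x R₁), C.mulVec x) ∈
        {X : ℝ × (Fin n → ℝ) | X.1 =
          ((X.2 a) ^ 2 + (X.2 b) ^ 2) * ((X.2 a) ^ 2 + t₂ * (X.2 b) ^ 2)
            + MvPolynomial.eval X.2 R₂} := by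
      rw [← hset]
      exact ⟨(((x a) ^ 2 + (x b) ^ 2) * ((x a) ^ 2 + t₁ * (x b) ^ 2)
        + MvPolynomial.eval x R₁, x), rfl, rfl⟩
    exact hmem
  -- special vectors
  set v : ℝ → ℝ → (Fin n → ℝ) :=
    fun ξ η => ξ • (Pi.single a 1 : Fin n → ℝ) + η • (Pi.single b 1 : Fin n → ℝ) with hv
  have hva : ∀ ξ η, v ξ η a = ξ := by
    intro ξ η
    simp [hv, Pi.single_eq_same, Pi.single_eq_of_ne hab]
  have hvb : ∀ ξ η, v ξ η b = η := by
    intro ξ η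
    simp [hv, Pi.single_eq_same, Pi.single_eq_of_ne hab.symm]
  have hw : ∀ ξ η, C.mulVec (v ξ η) = fun i => C i a * ξ + C i b * η := by
    intro ξ η
    funext i
    simp [hv, Matrix.mulVec_add, Matrix.mulVec_smul, Matrix.mulVec_single, mul_comm]
  -- the scaled identity
  have hkey : ∀ ξ η : ℝ,
      ((C a a * ξ + C a b * η) ^ 2 + (C b a * ξ + C b b * η) ^ 2) *
          ((C a a * ξ + C a b * η) ^ 2 + t₂ * (C b a * ξ + C b b * η) ^ 2)
        = l * ((ξ ^ 2 + η ^ 2) * (ξ ^ 2 + t₁ * η ^ 2)) := by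
    intro ξ η
    have := stmt19_key l ((ξ ^ 2 + η ^ 2) * (ξ ^ 2 + t₁ * η ^ 2))
      (((C a a * ξ + C a b * η) ^ 2 + (C b a * ξ + C b b * η) ^ 2) *
        ((C a a * ξ + C a b * η) ^ 2 + t₂ * (C b a * ξ + C b b * η) ^ 2))
      (v ξ η) (C.mulVec (v ξ η)) R₁ R₂ hR₁ hR₂ ?_
    · linarith [this]
    intro s
    have h := himg (v (s * ξ) (s * η))
    have hvs : v (s * ξ) (s * η) = fun i => s * v ξ η i := by
      funext i
      simp [hv, mul_add, mul_comm, mul_assoc, mul_left_comm]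
    have hws : C.mulVec (v (s * ξ) (s * η)) = fun i => s * C.mulVec (v ξ η) i := by
      rw [hw, hw]
      funext i
      ring
    rw [hva, hvb, hws, hvs] at h
    simp only [hw] at h ⊢
    linear_combination h
  -- the induced 2×2 matrix
  set D : Matrix (Fin 2) (Fin 2) ℝ := !![C a a, C a b; C b a, C b b] with hD
  have hq1pos : ∀ ξ η : ℝ, (ξ ≠ 0 ∨ η ≠ 0) →
      0 < (ξ ^ 2 + η ^ 2) * (ξ ^ 2 + t₁ * η ^ 2) := by
    intro ξ η h0
    have hsq : 0 < ξ ^ 2 + η ^ 2 := by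
      rcases h0 with h | h <;> positivity
    have : 0 < ξ ^ 2 + t₁ * η ^ 2 := by nlinarith [sq_nonneg ξ, sq_nonneg η]
    exact mul_pos hsq this
  have hzero : ∀ ξ η : ℝ, (ξ ≠ 0 ∨ η ≠ 0) →
      C a a * ξ + C a b * η = 0 → C b a * ξ + C b b * η = 0 → False := by
    intro ξ η h0 e1 e2
    have := hkey ξ η
    rw [e1, e2] at this
    have hpos := hq1pos ξ η h0
    have h' : l * ((ξ ^ 2 + η ^ 2) * (ξ ^ 2 + t₁ * η ^ 2)) = 0 := by linear_combination -this
    rcases mul_eq_zero.mp h' with h | h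
    · exact hl h
    · exact absurd h hpos.ne'
  have hdet : D.det ≠ 0 := by
    intro h0
    rw [hD, Matrix.det_fin_two_of] at h0
    by_cases hpq : C a a = 0 ∧ C a b = 0
    · by_cases hrs : C b a = 0 ∧ C b b = 0
      · exact hzero 1 0 (Or.inl one_ne_zero) (by rw [hpq.1, hpq.2]; ring)
          (by rw [hrs.1, hrs.2]; ring)
      · -- use (-C b b, C b a)
        have hne : -C b b ≠ 0 ∨ C b a ≠ 0 := by
          rcases not_and_or.mp hrs with h | h
          · right; exact h
          · left; simpa using h
        exact hzero (-C b b) (C b a) hne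
          (by rw [hpq.1, hpq.2]; ring) (by ring)
    · -- use (-C a b, C a a)
      have hne : -C a b ≠ 0 ∨ C a a ≠ 0 := by
        rcases not_and_or.mp hpq with h | h
        · right; exact h
        · left; simpa using h
      exact hzero (-C a b) (C a a) hne (by ring) (by nlinarith [h0])
  have hDu : IsUnit D.det := isUnit_iff_ne_zero.mpr hdet
  refine hq D l hDu hl ?_
  intro ξ η
  have := hkey ξ η
  simpa [hD] using this
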